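/- If X is an almost surely bounded nonnegative integer-valued random variable, then ρ(X) = 0 if and only if X = 0 almost surely. -/

import Mathlib

open scoped BigOperators

/-- `IsPMF p` : `p` is a probability mass function on `ℕ`. -/
def IsPMF (p : ℕ → ℝ) : Prop :=
  (∀ n, 0 ≤ p n) ∧ HasSum p 1

/-- Binomial `α`-thinning at the level of distributions:
`thin α p k = P(α ∘ X = k)` when `X` has pmf `p`. -/
noncomputable def thin (α : ℝ) (p : ℕ → ℝ) (k : ℕ) : ℝ :=
  ∑' n : ℕ, (n.choose k : ℝ) * α ^ k * (1 - α) ^ (n - k) * p n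

/-- Convolution of two pmfs on `ℕ` (law of the sum of independent variables). -/
noncomputable def conv (p q : ℕ → ℝ) (n : ℕ) : ℝ :=
  ∑ k ∈ Finset.range (n + 1), p k * q (n - k)

/-- `MemM α p` : the distribution `p` is an `α`-thinned distribution, i.e. `p ∈ M_α`. -/
def MemM (α : ℝ) (p : ℕ → ℝ) : Prop :=
  ∃ q : ℕ → ℝ, IsPMF q ∧ ∀ k, p k = thin α q k

/-- `rho p` : the minimal thinning parameter `ρ(X)`. -/
noncomputable def rho (p : ℕ → ℝ) : ℝ :=
  sInf {α : ℝ | α ∈ Set.Icc (0:ℝ) 1 ∧ MemM α p}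

lemma thin_one (q : ℕ → ℝ) (k : ℕ) : thin 1 q k = q k := by
  unfold thin
  have h : (fun n : ℕ => (n.choose k : ℝ) * 1 ^ k * (1 - 1) ^ (n - k) * q n)
      = fun n => if n = k then q k else 0 := by
    funext n
    rcases lt_trichotomy n k with h | h | h
    · simp [Nat.choose_eq_zero_of_lt h, h.ne]
    · subst h; simp
    · simp [h.ne', zero_pow (Nat.sub_ne_zero_of_lt h)]
  rw [h, tsum_ite_eq]

lemma thin_zero_zero (q : ℕ → ℝ) (hq : HasSum q 1) : thin 0 q 0 = 1 := by
  unfold thin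
  have h : (fun n : ℕ => (n.choose 0 : ℝ) * (0:ℝ) ^ 0 * (1 - 0) ^ (n - 0) * q n)
      = fun n => q n := by
    funext n; simp
  rw [h]
  exact hq.tsum_eq

lemma thin_zero_pos (q : ℕ → ℝ) (k : ℕ) (hk : k ≠ 0) : thin 0 q k = 0 := by
  unfold thin
  have h : (fun n : ℕ => (n.choose k : ℝ) * (0:ℝ) ^ k * (1 - 0) ^ (n - k) * q n)
      = fun _ => (0:ℝ) := by
    funext n; simp [zero_pow hk]
  rw [h, tsum_zero]

lemma binom_term_le_one {α : ℝ} (h0 : 0 ≤ α) (h1 : α ≤ 1) (n k : ℕ) :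
    (n.choose k : ℝ) * α ^ k * (1 - α) ^ (n - k) ≤ 1 := by
  have h1' : (0:ℝ) ≤ 1 - α := by linarith
  rcases lt_or_ge n k with h | h
  · simp [Nat.choose_eq_zero_of_lt h]
  · have key : ∑ j ∈ Finset.range (n + 1), α ^ j * (1 - α) ^ (n - j) * (n.choose j : ℝ) = 1 := by
      rw [← add_pow]
      simp
    calc (n.choose k : ℝ) * α ^ k * (1 - α) ^ (n - k)
        = α ^ k * (1 - α) ^ (n - k) * (n.choose k : ℝ) := by ring
      _ ≤ ∑ j ∈ Finset.range (n + 1), α ^ j * (1 - α) ^ (n - j) * (n.choose j : ℝ) :=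
          Finset.single_le_sum (f := fun j => α ^ j * (1 - α) ^ (n - j) * (n.choose j : ℝ))
            (fun j _ => mul_nonneg (mul_nonneg (pow_nonneg h0 _) (pow_nonneg h1' _))
              (Nat.cast_nonneg _))
            (Finset.mem_range.mpr (Nat.lt_succ_of_le h))
      _ = 1 := key

lemma thin_summand_nonneg {α : ℝ} (h0 : 0 ≤ α) (h1 : α ≤ 1) {q : ℕ → ℝ}
    (hq : ∀ n, 0 ≤ q n) (k n : ℕ) :
    0 ≤ (n.choose k : ℝ) * α ^ k * (1 - α) ^ (n - k) * q n :=
  mul_nonneg (mul_nonneg (mul_nonneg (Nat.cast_nonneg _) (pow_nonneg h0 _))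
    (pow_nonneg (by linarith) _)) (hq n)

lemma thin_summand_summable {α : ℝ} (h0 : 0 ≤ α) (h1 : α ≤ 1) {q : ℕ → ℝ}
    (hq : IsPMF q) (k : ℕ) :
    Summable (fun n => (n.choose k : ℝ) * α ^ k * (1 - α) ^ (n - k) * q n) := by
  refine Summable.of_nonneg_of_le (thin_summand_nonneg h0 h1 hq.1 k) (fun n => ?_) hq.2.summable
  calc (n.choose k : ℝ) * α ^ k * (1 - α) ^ (n - k) * q n
      ≤ 1 * q n := mul_le_mul_of_nonneg_right (binom_term_le_one h0 h1 n k) (hq.1 n)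
    _ = q n := one_mul _

/-- for a.s. bounded `X`, `ρ(X) = 0` iff `X = 0` a.s. -/
theorem stmt_9 (p : ℕ → ℝ) (hp : IsPMF p) (hb : ∃ N : ℕ, ∀ k, N < k → p k = 0) :
    rho p = 0 ↔ p 0 = 1 := by
  have hone : (1:ℝ) ∈ {α : ℝ | α ∈ Set.Icc (0:ℝ) 1 ∧ MemM α p} := by
    refine ⟨⟨zero_le_one, le_refl 1⟩, p, hp, fun k => (thin_one p k).symm⟩
  have hne : {α : ℝ | α ∈ Set.Icc (0:ℝ) 1 ∧ MemM α p}.Nonempty := ⟨1, hone⟩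
  have hbdd : BddBelow {α : ℝ | α ∈ Set.Icc (0:ℝ) 1 ∧ MemM α p} :=
    ⟨0, fun a ha => ha.1.1⟩
  constructor
  · -- rho p = 0 → p 0 = 1
    intro hrho
    by_contra hne01
    obtain ⟨N, hN⟩ := hb
    set N' := max N 1 with hN'
    have hN'1 : 1 ≤ N' := le_max_right _ _
    have hN'pos : (0:ℝ) < N' := by exact_mod_cast hN'1
    have hNz : ∀ k, N' < k → p k = 0 := fun k hk => hN k (lt_of_le_of_lt (le_max_left _ _) hk)
    have hp0le : p 0 ≤ 1 := le_hasSum hp.2 0 (fun n _ => hp.1 n)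
    have hp0lt : p 0 < 1 := lt_of_le_of_ne hp0le hne01
    set c : ℝ := (1 - p 0) / N' with hc
    have hcpos : 0 < c := div_pos (by linarith) hN'pos
    have hle : c ≤ rho p := by
      refine le_csInf hne ?_
      rintro a ⟨⟨ha0, ha1⟩, q, hq, hthin⟩
      rcases eq_or_lt_of_le ha0 with rfl | hapos
      · exfalso
        exact hne01 (by rw [hthin 0, thin_zero_zero q hq.2])
      · -- a > 0 : show c ≤ a
        have hsum := thin_summand_summable (le_of_lt hapos) ha1 hq
        have hqz : ∀ n, N' < n → q n = 0 := by
          intro n hn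
          have h1 : (n.choose n : ℝ) * a ^ n * (1 - a) ^ (n - n) * q n ≤ thin a q n :=
            Summable.le_tsum (hsum n) n (fun m _ => thin_summand_nonneg (le_of_lt hapos) ha1 hq.1 n m)
          rw [← hthin n, hNz n hn] at h1
          simp only [Nat.choose_self, Nat.cast_one, one_mul, Nat.sub_self, pow_zero,
            mul_one] at h1
          have h2 : 0 < a ^ n := pow_pos hapos n
          nlinarith [hq.1 n]
        have hp0 : p 0 = ∑' n, (1 - a) ^ n * q n := by
          rw [hthin 0]
          unfold thin
          congr 1
          funext n
          simp
        have hsum0 : Summable (fun n => (1 - a) ^ n * q n) := by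
          have := hsum 0
          simpa using this
        have h1a0 : (0:ℝ) ≤ 1 - a := by linarith
        have h1a1 : (1:ℝ) - a ≤ 1 := by linarith
        have hlow : (1 - a) ^ N' ≤ p 0 := by
          rw [hp0]
          have hconst : ∑' n, (1 - a) ^ N' * q n = (1 - a) ^ N' := by
            rw [tsum_mul_left, hq.2.tsum_eq, mul_one]
          rw [← hconst]
          refine Summable.tsum_le_tsum (fun n => ?_) (hq.2.summable.mul_left _) hsum0
          rcases le_or_gt n N' with h | h
          · exact mul_le_mul_of_nonneg_right (pow_le_pow_of_le_one h1a0 h1a1 h) (hq.1 n)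
          · rw [hqz n h, mul_zero, mul_zero]
        have hbern : 1 - (N' : ℝ) * a ≤ (1 - a) ^ N' := by
          have := one_add_mul_le_pow (a := -a) (by linarith) N'
          calc 1 - (N' : ℝ) * a = 1 + (N' : ℝ) * (-a) := by ring
            _ ≤ (1 + -a) ^ N' := this
            _ = (1 - a) ^ N' := by ring_nf
        have : 1 - (N' : ℝ) * a ≤ p 0 := le_trans hbern hlow
        rw [hc, div_le_iff₀ hN'pos]
        nlinarith
    rw [hrho] at hle
    linarith
  · -- p 0 = 1 → rho p = 0
    intro hp0
    have hpz : ∀ k, k ≠ 0 → p k = 0 := by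
      intro k hk
      have hsub : ∑ n ∈ ({0, k} : Finset ℕ), p n ≤ 1 :=
        sum_le_hasSum _ (fun n _ => hp.1 n) hp.2
      rw [Finset.sum_pair (Ne.symm hk)] at hsub
      have := hp.1 k
      linarith [hp0 ▸ hsub]
    have h0mem : (0:ℝ) ∈ {α : ℝ | α ∈ Set.Icc (0:ℝ) 1 ∧ MemM α p} := by
      refine ⟨⟨le_refl 0, zero_le_one⟩, p, hp, fun k => ?_⟩
      rcases eq_or_ne k 0 with rfl | hk
      · rw [thin_zero_zero p hp.2, hp0]
      · rw [thin_zero_pos p k hk, hpz k hk]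
    exact le_antisymm (csInf_le hbdd h0mem) (le_csInf hne (fun a ha => ha.1.1))
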